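/- The lattice of Lawvere–Tierney topologies on the topos of graphs is isomorphic to the four-element Boolean algebra. -/

import Mathlib

/-- A directed graph: nodes, arcs, source and target maps. -/
structure Graph' where
  N : Type
  A : Type
  src : A → N
  tgt : A → N

/-- A graph morphism. -/
@[ext]
structure Hom (G H : Graph') where
  fN : G.N → H.N
  fA : G.A → H.A
  hsrc : ∀ a, H.src (fA a) = fN (G.src a)
  htgt : ∀ a, H.tgt (fA a) = fN (G.tgt a)

/-- Composition of graph morphisms. -/
def Hom.comp {G H K : Graph'} (g : Hom H K) (f : Hom G H) : Hom G K where
  fN := g.fN ∘ f.fN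
  fA := g.fA ∘ f.fA
  hsrc a := by simp [g.hsrc, f.hsrc]
  htgt a := by simp [g.htgt, f.htgt]

/-- The arcs of the subobject classifier of graphs. -/
inductive OmegaA | zero | s | t | st | top
deriving DecidableEq

/-- The subobject classifier graph `Ω`: nodes are `Bool` (`true` = "in",
`false` = "out"); arcs `0_A : out→out`, `s : in→out`, `t : out→in`,
`st : in→in`, `A : in→in`. -/
def Omega : Graph' where
  N := Bool
  A := OmegaA
  src a := match a with
    | .zero => false | .s => true | .t => false | .st => true | .top => true
  tgt a := match a with
    | .zero => false | .s => false | .t => true | .st => true | .top => true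

/-- A subgraph of `G`, given by a set of nodes and a set of arcs whose
endpoints belong to the node set. -/
def IsSubgraph (G : Graph') (SN : Set G.N) (SA : Set G.A) : Prop :=
  ∀ a ∈ SA, G.src a ∈ SN ∧ G.tgt a ∈ SN

/-- `χ : G → Ω` classifies the subgraph `(SN, SA)`: the subgraph is the pullback
of `⊤ : 1 → Ω` (picking the node `true` and the arc `top`) along `χ`. -/
def Classifies {G : Graph'} (χ : Hom G Omega) (SN : Set G.N) (SA : Set G.A) : Prop :=
  (∀ n, n ∈ SN ↔ χ.fN n = true) ∧ (∀ a, a ∈ SA ↔ χ.fA a = OmegaA.top)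

/-- The order on the arcs of `Ω`: `0_A < s, t < st < A` with `s, t` incomparable. -/
def leA : OmegaA → OmegaA → Prop := fun x y =>
  x = y ∨ x = OmegaA.zero ∨ y = OmegaA.top ∨ (x ≠ OmegaA.top ∧ y = OmegaA.st)

/-- The meet on the arcs of `Ω` with respect to the order
`0_A < s, t < st < A` (`s`, `t` incomparable). -/
def meetA : OmegaA → OmegaA → OmegaA
  | .top, x => x
  | x, .top => x
  | .zero, _ => .zero
  | _, .zero => .zero
  | .st, x => x
  | x, .st => x
  | .s, .s => .s
  | .t, .t => .t
  | .s, .t => .zero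
  | .t, .s => .zero

/-- A Lawvere–Tierney topology on the topos of graphs, described concretely as a
graph endomorphism of `Ω` preserving truth and conjunction and idempotent. -/
def IsTopology (j : Hom Omega Omega) : Prop :=
  (j.fN true = true ∧ j.fA OmegaA.top = OmegaA.top) ∧
  (∀ n, j.fN (j.fN n) = j.fN n) ∧ (∀ a, j.fA (j.fA a) = j.fA a) ∧
  (∀ n m, j.fN (n && m) = (j.fN n && j.fN m)) ∧
  (∀ a b, j.fA (meetA a b) = meetA (j.fA a) (j.fA b))

/-- The identity topology. -/
def idTop : Hom Omega Omega := ⟨id, id, fun _ => rfl, fun _ => rfl⟩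

/-- The constant-true topology `⊤ ∘ !`. -/
def trueTop : Hom Omega Omega where
  fN _ := true
  fA _ := OmegaA.top
  hsrc a := by cases a <;> rfl
  htgt a := by cases a <;> rfl

/-- The double negation topology. -/
def negnegTop : Hom Omega Omega where
  fN n := n
  fA a := match a with
    | .st => .top | .top => .top | .zero => .zero | .s => .s | .t => .t
  hsrc a := by cases a <;> rfl
  htgt a := by cases a <;> rfl

/-- The closed topology for the global element `st`. -/
def closedTop : Hom Omega Omega where
  fN _ := true
  fA a := match a with
    | .top => .top | _ => .st
  hsrc a := by cases a <;> rfl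
  htgt a := by cases a <;> rfl

/-- The pointwise order on maps `Ω → Ω` induced by the internal order of `Ω`
(on nodes `false < true`, on arcs the order `0_A < s, t < st < A`). -/
def topLE (j k : Hom Omega Omega) : Prop :=
  (∀ n : Bool, j.fN n = true → k.fN n = true) ∧ (∀ a, leA (j.fA a) (k.fA a))


instance : DecidableEq Omega.N := inferInstanceAs (DecidableEq Bool)
instance : DecidableEq Omega.A := inferInstanceAs (DecidableEq OmegaA)

instance : Fintype OmegaA :=
  ⟨⟨{.zero, .s, .t, .st, .top}, by decide⟩, by intro x; cases x <;> decide⟩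

instance : Fintype Omega.N := inferInstanceAs (Fintype Bool)
instance : Fintype Omega.A := inferInstanceAs (Fintype OmegaA)

instance (x y : OmegaA) : Decidable (leA x y) := by unfold leA; infer_instance

instance (x y : Omega.A) : Decidable (leA x y) :=
  (fun (x y : OmegaA) => (inferInstance : Decidable (leA x y))) x y
instance (a : Omega.A) (b : OmegaA) : Decidable (a = b) := instDecidableEqOmegaA a b
instance (a : Omega.N) (b : Bool) : Decidable (a = b) := instDecidableEqBool a b

instance (j k : Hom Omega Omega) : Decidable (∀ n : Bool, j.fN n = true → k.fN n = true) :=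
  (fun (f g : Bool → Bool) => (inferInstance : Decidable (∀ n : Bool, f n = true → g n = true))) j.fN k.fN

instance (j k : Hom Omega Omega) : Decidable (topLE j k) := by unfold topLE; infer_instance

instance (j : Hom Omega Omega) : Decidable (IsTopology j) := by
  unfold IsTopology; infer_instance

set_option linter.constructorNameAsVariable false

def srcA : OmegaA → Bool
  | .zero => false | .s => true | .t => false | .st => true | .top => true

def tgtA : OmegaA → Bool
  | .zero => false | .s => false | .t => true | .st => true | .top => true

def applyF (z s t u : OmegaA) : OmegaA → OmegaA
  | .zero => z | .s => s | .t => t | .st => u | .top => .top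

set_option synthInstance.maxSize 2000 in
set_option synthInstance.maxHeartbeats 1000000 in
set_option maxHeartbeats 2000000 in
lemma keyVals (bf : Bool) (z s t u : OmegaA)
    (hz : srcA z = bf ∧ tgtA z = bf)
    (hs : srcA s = true ∧ tgtA s = bf)
    (ht : srcA t = bf ∧ tgtA t = true)
    (hu : srcA u = true ∧ tgtA u = true)
    (idem : applyF z s t u z = z ∧ applyF z s t u s = s ∧
      applyF z s t u t = t ∧ applyF z s t u u = u)
    (meet : ∀ a b, applyF z s t u (meetA a b) = meetA (applyF z s t u a) (applyF z s t u b)) :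
    (bf = false ∧ z = OmegaA.zero ∧ s = OmegaA.s ∧ t = OmegaA.t ∧ u = OmegaA.st) ∨
    (bf = false ∧ z = OmegaA.zero ∧ s = OmegaA.s ∧ t = OmegaA.t ∧ u = OmegaA.top) ∨
    (bf = true ∧ z = OmegaA.st ∧ s = OmegaA.st ∧ t = OmegaA.st ∧ u = OmegaA.st) ∨
    (bf = true ∧ z = OmegaA.top ∧ s = OmegaA.top ∧ t = OmegaA.top ∧ u = OmegaA.top) := by
  revert hz hs ht hu idem meet
  revert bf z s t u
  decide

lemma classify (j : Hom Omega Omega) (h : IsTopology j) :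
    j = idTop ∨ j = negnegTop ∨ j = closedTop ∨ j = trueTop := by
  have htop : j.fA .top = .top := h.1.2
  have hfa : applyF (j.fA .zero) (j.fA .s) (j.fA .t) (j.fA .st) = j.fA := by
    funext x; cases x <;> simp [applyF, htop] <;> rfl
  have hidem := h.2.2.1
  have htrue : j.fN true = true := h.1.1
  have key := keyVals (j.fN false) (j.fA .zero) (j.fA .s) (j.fA .t) (j.fA .st)
    ⟨j.hsrc .zero, j.htgt .zero⟩ ⟨(j.hsrc .s).trans htrue, j.htgt .s⟩
    ⟨j.hsrc .t, (j.htgt .t).trans htrue⟩ ⟨(j.hsrc .st).trans htrue, (j.htgt .st).trans htrue⟩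
    (by rw [hfa]; exact ⟨hidem _, hidem _, hidem _, hidem _⟩)
    (by rw [hfa]; exact h.2.2.2.2)
  rcases key with ⟨hb, h1, h2, h3, h4⟩ | ⟨hb, h1, h2, h3, h4⟩ |
    ⟨hb, h1, h2, h3, h4⟩ | ⟨hb, h1, h2, h3, h4⟩
  · exact Or.inl (Hom.ext (funext fun b => by cases b <;> assumption)
      (funext fun a => by cases a <;> assumption))
  · exact Or.inr (Or.inl (Hom.ext (funext fun b => by cases b <;> assumption)
      (funext fun a => by cases a <;> assumption)))
  · exact Or.inr (Or.inr (Or.inl (Hom.ext (funext fun b => by cases b <;> assumption)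
      (funext fun a => by cases a <;> assumption))))
  · exact Or.inr (Or.inr (Or.inr (Hom.ext (funext fun b => by cases b <;> assumption)
      (funext fun a => by cases a <;> assumption))))

lemma isTop_id : IsTopology idTop := by decide
lemma isTop_nn : IsTopology negnegTop := by decide
lemma isTop_cl : IsTopology closedTop := by decide
lemma isTop_tr : IsTopology trueTop := by decide

/-- the lattice of Lawvere–Tierney topologies on the topos of
graphs is isomorphic to the four-element Boolean algebra `Bool × Bool`. -/
theorem topologies_lattice :
    ∃ e : {j : Hom Omega Omega // IsTopology j} ≃ Bool × Bool,
      ∀ j k : {j : Hom Omega Omega // IsTopology j},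
        topLE j.val k.val ↔ e j ≤ e k := by
  refine ⟨{
    toFun := fun j => (decide (j.val.fA .st = .top), j.val.fN false)
    invFun := fun p => match p with
      | (false, false) => ⟨idTop, isTop_id⟩
      | (true, false) => ⟨negnegTop, isTop_nn⟩
      | (false, true) => ⟨closedTop, isTop_cl⟩
      | (true, true) => ⟨trueTop, isTop_tr⟩
    left_inv := fun j => by
      apply Subtype.ext
      rcases classify j.val j.2 with h | h | h | h <;> simp only [h] <;> rfl
    right_inv := fun p => by
      rcases p with ⟨_|_, _|_⟩ <;> rfl }, ?_⟩
  intro j k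
  rcases classify j.val j.2 with hj | hj | hj | hj <;>
    rcases classify k.val k.2 with hk | hk | hk | hk <;>
      simp only [Equiv.coe_fn_mk, hj, hk] <;> decide
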